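/- For any real t with |t| ≤ 1/4, (1-2t)^(-1/2) * e^(-t) ≤ e^(2t²). -/
import Mathlib

lemma key (u : ℝ) (hu : |u| ≤ 1/2) : Real.exp (-u - u^2) ≤ 1 - u := by
  rw [abs_le] at hu
  rcases le_total u 0 with h | h
  · have h1 : u + u^2 + 1 ≤ Real.exp (u + u^2) := Real.add_one_le_exp _
    have h2 : (0:ℝ) < 1 + u + u^2 := by nlinarith
    have h3 : Real.exp (-u - u^2) = (Real.exp (u + u^2))⁻¹ := by
      rw [← Real.exp_neg]; ring_nf
    rw [h3]
    have h4 : (Real.exp (u + u^2))⁻¹ ≤ (1 + u + u^2)⁻¹ := by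
      apply inv_anti₀ h2; linarith
    apply h4.trans
    rw [inv_le_iff_one_le_mul₀ h2]
    nlinarith
  · have hx : (0:ℝ) ≤ u + u^2 := by nlinarith
    have h1 := Real.quadratic_le_exp_of_nonneg hx
    have h2 : Real.exp (-u - u^2) = (Real.exp (u + u^2))⁻¹ := by
      rw [← Real.exp_neg]; ring_nf
    have h3 : (0:ℝ) < 1 + (u + u^2) + (u + u^2)^2 / 2 := by nlinarith
    rw [h2]
    have h4 : (Real.exp (u + u^2))⁻¹ ≤ (1 + (u + u^2) + (u + u^2)^2 / 2)⁻¹ := by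
      apply inv_anti₀ h3; linarith
    apply h4.trans
    rw [inv_le_iff_one_le_mul₀ h3]
    nlinarith [sq_nonneg u, sq_nonneg (u - 1/2)]

theorem stmt0 (t : ℝ) (ht : |t| ≤ 1/4) :
    (1 - 2*t) ^ (-(1:ℝ)/2) * Real.exp (-t) ≤ Real.exp (2 * t^2) := by
  have hab := abs_le.mp ht
  have hpos : (0:ℝ) < 1 - 2*t := by linarith
  have hu : |2*t| ≤ 1/2 := by rw [abs_le]; constructor <;> linarith
  have hk := key (2*t) hu
  have hsq : Real.sqrt (1 - 2*t) > 0 := Real.sqrt_pos.mpr hpos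
  have hr : (1 - 2*t) ^ (-(1:ℝ)/2) = (Real.sqrt (1 - 2*t))⁻¹ := by
    rw [Real.sqrt_eq_rpow, ← Real.rpow_neg hpos.le]
    norm_num
  rw [hr, inv_mul_le_iff₀ hsq]
  have hle : Real.exp (-t - 2*t^2) ≤ Real.sqrt (1 - 2*t) := by
    have hsq2 : Real.exp (-t - 2*t^2) ^ 2 ≤ 1 - 2*t := by
      calc Real.exp (-t - 2*t^2) ^ 2 = Real.exp (-(2*t) - (2*t)^2) := by
            rw [← Real.exp_nat_mul]; ring_nf
        _ ≤ 1 - 2*t := hk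
    nlinarith [Real.sq_sqrt hpos.le, Real.sqrt_nonneg (1 - 2*t), Real.exp_pos (-t - 2*t^2)]
  calc Real.exp (-t) = Real.exp (-t - 2*t^2) * Real.exp (2*t^2) := by
        rw [← Real.exp_add]; ring_nf
    _ ≤ Real.sqrt (1 - 2*t) * Real.exp (2*t^2) :=
        mul_le_mul_of_nonneg_right hle (Real.exp_pos _).le
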